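/- (Gluing fiberwise transports.) Let $\mu_0, \mu_1$ be probability measures on a standard Borel space $\mathcal{Y}$, $\phi : \mathcal{Y} \to \mathcal{Z}$ measurable with $\phi_\#\mu_0 = \phi_\#\mu_1 = Q$. Let $\{\mu_{0,z}\}$ and $\{\mu_{1,z}\}$ be disintegrations of $\mu_0$ and $\mu_1$ with respect to $\phi$, each supported on the fiber $\phi^{-1}(z)$ for $Q$-a.e. $z$. Suppose there is a jointly measurable family of maps $T_z : \mathcal{Y} \to \mathcal{Y}$ with $(T_z)_\# \mu_{0,z} = \mu_{1,z}$ for $Q$-a.e. $z$. Then the map $f(y) := T_{\phi(y)}(y)$ is measurable, satisfies $f_\# \mu_0 = \mu_1$, and $\phi(f(y)) = \phi(y)$ for $\mu_0$-a.e. $y$. -/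

import Mathlib

open MeasureTheory ProbabilityTheory

/-- Gluing fiberwise transports: if `μ₀, μ₁` have common feature law `Q = φ#μ₀ = φ#μ₁`,
disintegrations `κ₀, κ₁` supported on the fibers of `φ`, and a jointly measurable family
of maps `T_z` pushing `κ₀(z)` to `κ₁(z)` for `Q`-a.e. `z`, then `f(y) := T_{φ(y)}(y)` is
measurable, pushes `μ₀` to `μ₁`, and preserves `φ` `μ₀`-almost surely. -/
theorem stmt10 {𝒴 𝒵 : Type*} [MeasurableSpace 𝒴] [StandardBorelSpace 𝒴]
    [MeasurableSpace 𝒵] [StandardBorelSpace 𝒵]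
    (μ₀ μ₁ : Measure 𝒴) [IsProbabilityMeasure μ₀] [IsProbabilityMeasure μ₁]
    (φ : 𝒴 → 𝒵) (hφ : Measurable φ)
    (Q : Measure 𝒵) [IsProbabilityMeasure Q]
    (hQ₀ : μ₀.map φ = Q) (hQ₁ : μ₁.map φ = Q)
    (κ₀ κ₁ : ProbabilityTheory.Kernel 𝒵 𝒴) [IsMarkovKernel κ₀] [IsMarkovKernel κ₁]
    (hdis₀ : Q.bind κ₀ = μ₀) (hdis₁ : Q.bind κ₁ = μ₁)
    (hfib₀ : ∀ᵐ z ∂Q, κ₀ z (φ ⁻¹' {z}) = 1)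
    (hfib₁ : ∀ᵐ z ∂Q, κ₁ z (φ ⁻¹' {z}) = 1)
    (T : 𝒵 → 𝒴 → 𝒴) (hT : Measurable fun q : 𝒵 × 𝒴 => T q.1 q.2)
    (hTpush : ∀ᵐ z ∂Q, (κ₀ z).map (T z) = κ₁ z) :
    Measurable (fun y => T (φ y) y) ∧
    μ₀.map (fun y => T (φ y) y) = μ₁ ∧
    ∀ᵐ y ∂μ₀, φ (T (φ y) y) = φ y := by
  set f : 𝒴 → 𝒴 := fun y => T (φ y) y with hf_def
  have hf : Measurable f := hT.comp (hφ.prodMk measurable_id)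
  have hTz : ∀ z, Measurable (T z) := fun z => hT.comp measurable_prodMk_left
  -- complement of fiber is null
  have hcompl₀ : ∀ᵐ z ∂Q, κ₀ z ((φ ⁻¹' {z})ᶜ) = 0 := by
    filter_upwards [hfib₀] with z hz
    have := measure_compl (μ := κ₀ z) (hφ (measurableSet_singleton z)) (measure_ne_top _ _)
    simp [hz, this]
  -- key: fiberwise, f pushes κ₀ z to κ₁ z
  have key : ∀ᵐ z ∂Q, ∀ s : Set 𝒴, MeasurableSet s → κ₀ z (f ⁻¹' s) = κ₁ z s := by
    filter_upwards [hcompl₀, hTpush] with z hz hpush s hs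
    have hsets : f ⁻¹' s ∩ φ ⁻¹' {z} = T z ⁻¹' s ∩ φ ⁻¹' {z} := by
      ext y
      simp only [Set.mem_inter_iff, Set.mem_preimage, Set.mem_singleton_iff]
      constructor
      · rintro ⟨h1, h2⟩; exact ⟨by simpa [hf_def, h2] using h1, h2⟩
      · rintro ⟨h1, h2⟩; exact ⟨by simpa [hf_def, h2] using h1, h2⟩
    calc κ₀ z (f ⁻¹' s) = κ₀ z (f ⁻¹' s ∩ φ ⁻¹' {z}) := (measure_inter_conull hz).symm
      _ = κ₀ z (T z ⁻¹' s ∩ φ ⁻¹' {z}) := by rw [hsets]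
      _ = κ₀ z (T z ⁻¹' s) := measure_inter_conull hz
      _ = ((κ₀ z).map (T z)) s := (Measure.map_apply (hTz z) hs).symm
      _ = κ₁ z s := by rw [hpush]
  have hmap : μ₀.map f = μ₁ := by
    ext s hs
    rw [Measure.map_apply hf hs, ← hdis₀, ← hdis₁,
      Measure.bind_apply (hf hs) (κ₀.measurable.aemeasurable),
      Measure.bind_apply hs (κ₁.measurable.aemeasurable)]
    refine lintegral_congr_ae ?_
    filter_upwards [key] with z hz using hz s hs
  refine ⟨hf, hmap, ?_⟩
  -- φ-preservation
  letI := upgradeStandardBorel 𝒵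
  have hB : MeasurableSet {y | ¬ φ (f y) = φ y} :=
    ((hφ.comp hf).stronglyMeasurable.measurableSet_eq_fun
      hφ.stronglyMeasurable).compl
  rw [Filter.eventually_iff, mem_ae_iff]
  have : μ₀ {y | φ (f y) = φ y}ᶜ = 0 := by
    rw [← hdis₀, Measure.bind_apply (by exact hB) (κ₀.measurable.aemeasurable)]
    refine lintegral_eq_zero_iff (κ₀.measurable_coe (by exact hB)) |>.mpr ?_
    filter_upwards [hcompl₀, hTpush, hfib₁] with z hz₀ hpush hz₁
    have hT1 : κ₀ z (T z ⁻¹' (φ ⁻¹' {z})) = 1 := by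
      rw [← Measure.map_apply (hTz z) (hφ (measurableSet_singleton z)), hpush]
      exact hz₁
    have hT0 : κ₀ z ((T z ⁻¹' (φ ⁻¹' {z}))ᶜ) = 0 := by
      have := measure_compl (μ := κ₀ z)
        ((hTz z) (hφ (measurableSet_singleton z))) (measure_ne_top _ _)
      simp [hT1, this]
    have hsub : {y | φ (f y) = φ y}ᶜ ⊆ (φ ⁻¹' {z})ᶜ ∪ (T z ⁻¹' (φ ⁻¹' {z}))ᶜ := by
      intro y hy
      by_contra hc
      simp only [Set.mem_union, not_or, Set.mem_compl_iff, Set.mem_preimage,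
        Set.mem_singleton_iff, not_not] at hc
      obtain ⟨h1, h2⟩ := hc
      exact hy (by simp [hf_def, h1, h2])
    simp only [Pi.zero_apply]
    exact le_antisymm (le_trans (measure_mono hsub)
      (le_trans (measure_union_le _ _) (by simp [hz₀, hT0]))) zero_le
  exact this
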